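/- Let x, y be bases of a matroid M and w a weight function such that w(x) = w(y) is the minimum base weight. If for every bijection γ : x\y → y\x there exists u ∈ x\y with w(u) ≠ w(γ(u)), then x = y. Equivalently: any two minimum-weight bases differ only in elements that can be matched up with equal weights. -/

import Mathlib

open Set

private lemma finsum_mem_eq_toFinset_sum' {α : Type*} (w : α → ℝ) {s : Set α} (hs : s.Finite) :
    (∑ᶠ e ∈ s, w e) = ∑ e ∈ hs.toFinset, w e := by
  rw [← finsum_mem_coe_finset, Set.Finite.coe_toFinset]

private lemma sum_exchange' {α : Type*} [Fintype α] (w : α → ℝ) {s : Set α} {e f : α}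
    (he : e ∈ s) (hf : f ∉ s) :
    (∑ᶠ a ∈ insert f (s \ {e}), w a) = (∑ᶠ a ∈ s, w a) - w e + w f := by
  classical
  rw [finsum_mem_eq_toFinset_sum' w (Set.toFinite _),
    finsum_mem_eq_toFinset_sum' w (Set.toFinite s)]
  have h1 : (Set.toFinite (insert f (s \ {e}))).toFinset
      = insert f ((Set.toFinite s).toFinset.erase e) := by
    ext a
    simp only [Set.Finite.mem_toFinset, Finset.mem_insert, Finset.mem_erase,
      Set.mem_insert_iff, Set.mem_diff, Set.mem_singleton_iff]
    tauto
  rw [h1, Finset.sum_insert (by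
      simp only [Finset.mem_erase, Set.Finite.mem_toFinset]
      exact fun h => hf h.2),
    Finset.sum_erase_eq_sub (by simpa only [Set.Finite.mem_toFinset] using he)]
  ring

private lemma equiv_extend' {α β : Type*} {s : Set α} {t : Set β} {e : α} {f : β}
    (he : e ∈ s) (hf : f ∈ t)
    (γ' : (s \ {e} : Set α) ≃ (t \ {f} : Set β))
    (w : α → ℝ) (v : β → ℝ)
    (hwe : w e = v f) (hγ' : ∀ u : (s \ {e} : Set α), w u = v (γ' u)) :
    ∃ γ : s ≃ t, ∀ u : s, w u = v (γ u) := by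
  classical
  refine ⟨⟨fun u => if h : (u : α) = e then ⟨f, hf⟩ else
      ⟨γ' ⟨u, ⟨u.2, h⟩⟩, (γ' ⟨u, ⟨u.2, h⟩⟩).2.1⟩,
    fun z => if h : (z : β) = f then ⟨e, he⟩ else
      ⟨γ'.symm ⟨z, ⟨z.2, h⟩⟩, (γ'.symm ⟨z, ⟨z.2, h⟩⟩).2.1⟩, ?_, ?_⟩, ?_⟩
  · intro u
    by_cases h : (u : α) = e
    · dsimp only
      rw [dif_pos h]
      simp only [dif_pos rfl]
      exact Subtype.ext h.symm
    · dsimp only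
      rw [dif_neg h]
      have hne : ((γ' ⟨u, ⟨u.2, h⟩⟩ : (t \ {f} : Set β)) : β) ≠ f :=
        (γ' ⟨u, ⟨u.2, h⟩⟩).2.2
      simp only [dif_neg hne]
      have : (⟨((γ' ⟨u, ⟨u.2, h⟩⟩ : (t \ {f} : Set β)) : β),
          ⟨(γ' ⟨u, ⟨u.2, h⟩⟩).2.1, hne⟩⟩ : (t \ {f} : Set β)) = γ' ⟨u, ⟨u.2, h⟩⟩ := rfl
      rw [this, Equiv.symm_apply_apply]
  · intro z
    by_cases h : (z : β) = f
    · dsimp only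
      rw [dif_pos h]
      simp only [dif_pos rfl]
      exact Subtype.ext h.symm
    · dsimp only
      rw [dif_neg h]
      have hne : ((γ'.symm ⟨z, ⟨z.2, h⟩⟩ : (s \ {e} : Set α)) : α) ≠ e :=
        (γ'.symm ⟨z, ⟨z.2, h⟩⟩).2.2
      simp only [dif_neg hne]
      have : (⟨((γ'.symm ⟨z, ⟨z.2, h⟩⟩ : (s \ {e} : Set α)) : α),
          ⟨(γ'.symm ⟨z, ⟨z.2, h⟩⟩).2.1, hne⟩⟩ : (s \ {e} : Set α)) = γ'.symm ⟨z, ⟨z.2, h⟩⟩ := rfl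
      rw [this, Equiv.apply_symm_apply]
  · intro u
    by_cases h : (u : α) = e
    · simp only [Equiv.coe_fn_mk, dif_pos h, h]
      exact hwe
    · simp only [Equiv.coe_fn_mk, dif_neg h]
      exact hγ' ⟨u, ⟨u.2, h⟩⟩

private lemma exists_weight_equiv' {α : Type*} [Fintype α] (M : Matroid α) (w : α → ℝ) :
    ∀ n (x y : Set α), (x \ y).ncard = n → M.IsBase x → M.IsBase y →
    (∀ b : Set α, M.IsBase b → (∑ᶠ e ∈ x, w e) ≤ ∑ᶠ e ∈ b, w e) →
    (∀ b : Set α, M.IsBase b → (∑ᶠ e ∈ y, w e) ≤ ∑ᶠ e ∈ b, w e) →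
    ∃ γ : (x \ y : Set α) ≃ (y \ x : Set α), ∀ u : (x \ y : Set α), w u = w (γ u) := by
  intro n
  induction n with
  | zero =>
    intro x y hcard hx hy _ _
    have hxy : x = y := by
      have : x \ y = ∅ := (Set.ncard_eq_zero (Set.toFinite _)).1 hcard
      exact hx.eq_of_subset_isBase hy (Set.diff_eq_empty.1 this)
    subst hxy
    exact ⟨Equiv.refl _, fun u => (u.2.2 u.2.1).elim⟩
  | succ n ih =>
    intro x y hcard hx hy hxmin hymin
    have hxyne : (x \ y).Nonempty := by
      rw [Set.nonempty_iff_ne_empty]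
      intro h
      rw [h] at hcard
      simp at hcard
    have hyxne : (y \ x).Nonempty := by
      rw [Set.nonempty_iff_ne_empty]
      intro h
      have := hy.ncard_diff_comm hx
      rw [h, hcard] at this
      simp at this
    obtain ⟨e, he, hemax⟩ := Set.exists_max_image (x \ y) w (Set.toFinite _) hxyne
    obtain ⟨g, hg, hgmax⟩ := Set.exists_max_image (y \ x) w (Set.toFinite _) hyxne
    obtain ⟨f, hf, hx'⟩ := hx.exchange hy he
    obtain ⟨e', he', hy'⟩ := hy.exchange hx hg
    have h1 : w e ≤ w f := by
      have := hxmin _ hx'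
      rw [sum_exchange' w he.1 hf.2] at this
      linarith
    have h2 : w g ≤ w e' := by
      have := hymin _ hy'
      rw [sum_exchange' w hg.1 he'.2] at this
      linarith
    have hef : w e = w f :=
      le_antisymm h1 (by
        have := hgmax f hf
        have := hemax e' he'
        linarith)
    -- the new base x' = insert f (x \ {e}) has the same (minimum) weight
    set x' : Set α := insert f (x \ {e}) with hx'def
    have hsum : (∑ᶠ a ∈ x', w a) = ∑ᶠ a ∈ x, w a := by
      rw [sum_exchange' w he.1 hf.2, hef]; ring
    have hx'min : ∀ b : Set α, M.IsBase b → (∑ᶠ a ∈ x', w a) ≤ ∑ᶠ a ∈ b, w a := by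
      intro b hb
      rw [hsum]
      exact hxmin b hb
    have hxy' : x' \ y = (x \ y) \ {e} := by
      ext a
      by_cases haf : a = f
      · simp [hx'def, haf, hf.1]
      · simp only [hx'def, Set.mem_diff, Set.mem_insert_iff, Set.mem_singleton_iff]
        tauto
    have hyx' : y \ x' = (y \ x) \ {f} := by
      ext a
      by_cases hae : a = e
      · simp [hx'def, hae, he.1, he.2]
      · simp only [hx'def, Set.mem_diff, Set.mem_insert_iff, Set.mem_singleton_iff]
        tauto
    have hcard' : (x' \ y).ncard = n := by
      rw [hxy', Set.ncard_diff_singleton_of_mem he, hcard]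
      omega
    obtain ⟨γ', hγ'⟩ := ih x' y hcard' hx' hy hx'min hymin
    -- transport γ' along the set equalities
    refine equiv_extend' he hf
      (((Equiv.setCongr hxy'.symm).trans γ').trans (Equiv.setCongr hyx')) w w hef ?_
    intro u
    exact hγ' ((Equiv.setCongr hxy'.symm) u)

/-- let `x, y` be minimum-weight bases of a matroid (with equal, minimum,
total weight). If every bijection `γ : x \ y ≃ y \ x` fails to preserve weights, i.e.
admits some `u ∈ x \ y` with `w u ≠ w (γ u)`, then `x = y`. -/
theorem min_weight_bases_eq_of_no_weight_bijection
    {α : Type*} [Fintype α] (M : Matroid α) (w : α → ℝ)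
    (x y : Set α) (hx : M.IsBase x) (hy : M.IsBase y)
    (hxmin : ∀ b : Set α, M.IsBase b → (∑ᶠ e ∈ x, w e) ≤ ∑ᶠ e ∈ b, w e)
    (hymin : ∀ b : Set α, M.IsBase b → (∑ᶠ e ∈ y, w e) ≤ ∑ᶠ e ∈ b, w e)
    (hw : (∑ᶠ e ∈ x, w e) = ∑ᶠ e ∈ y, w e)
    (hno : ∀ γ : (x \ y : Set α) ≃ (y \ x : Set α),
      ∃ u : (x \ y : Set α), w u ≠ w (γ u)) :
    x = y := by
  obtain ⟨γ, hγ⟩ := exists_weight_equiv' M w (x \ y).ncard x y rfl hx hy hxmin hymin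
  obtain ⟨u, hu⟩ := hno γ
  exact absurd (hγ u) hu
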